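/- Fix a finitely-supported joint distribution H over the values of n players and an α-moral mechanism M with 0 ≤ α ≤ 1. Then there exists a truthful (dominant-strategy, individually rational, no-positive-transfers) mechanism M' whose expected revenue over H is at least half of the expected revenue of M over H. -/

import Mathlib

open scoped NNReal
open Finset

/-- A deterministic direct mechanism for selling a single item to `n` players:
`alloc v = some i` means player `i` gets the item, `alloc v = none` means the
item is unallocated; `pay v i` is the payment of player `i`. -/
structure Mechanism (n : ℕ) where
  alloc : (Fin n → ℝ≥0) → Option (Fin n)
  pay : (Fin n → ℝ≥0) → Fin n → ℝ

namespace Mechanism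

variable {n : ℕ}

/-- The profit of player `i` with true value `t` when the submitted bid vector is `b`:
`π = t·[i wins at b] − pay(b)_i`. -/
def util (M : Mechanism n) (b : Fin n → ℝ≥0) (i : Fin n) (t : ℝ≥0) : ℝ :=
  (if M.alloc b = some i then (t : ℝ) else 0) - M.pay b i

/-- Individual rationality. -/
def IR (M : Mechanism n) : Prop :=
  ∀ v i, M.pay v i ≤ if M.alloc v = some i then ((v i : ℝ)) else 0

/-- No positive transfers. -/
def NPT (M : Mechanism n) : Prop := ∀ v i, 0 ≤ M.pay v i

/-- `α`-moral mechanism: individually rational, no positive transfers, and whenever a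
misreport `r` of player `i` strictly increases his profit (compared to truth-telling),
the gain is at most `α` times the total loss the misreport causes to the other players. -/
def Moral (α : ℝ) (M : Mechanism n) : Prop :=
  M.IR ∧ M.NPT ∧
  ∀ (v : Fin n → ℝ≥0) (i : Fin n) (r : ℝ≥0),
    0 < M.util (Function.update v i r) i (v i) - M.util v i (v i) →
    M.util (Function.update v i r) i (v i) - M.util v i (v i) ≤
      α * ∑ j ∈ Finset.univ.erase i,
        (M.util v j (v j) - M.util (Function.update v i r) j (v j))

/-- Truth-telling is a dominant strategy. -/
def DominantStrategy (M : Mechanism n) : Prop :=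
  ∀ (v : Fin n → ℝ≥0) (i : Fin n) (r : ℝ≥0),
    M.util (Function.update v i r) i (v i) ≤ M.util v i (v i)

end Mechanism

namespace StmtAux

open Mechanism
open scoped Classical

variable {n : ℕ}

/-- Losers pay 0 (from IR + NPT). -/
lemma loser_pay {M : Mechanism n} (hIR : M.IR) (hN : M.NPT) {v : Fin n → ℝ≥0} {i : Fin n}
    (h : M.alloc v ≠ some i) : M.pay v i = 0 := by
  have h1 := hIR v i
  rw [if_neg h] at h1
  exact le_antisymm h1 (hN v i)

lemma loser_util {M : Mechanism n} (hIR : M.IR) (hN : M.NPT) {v : Fin n → ℝ≥0} {i : Fin n}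
    (h : M.alloc v ≠ some i) (t : ℝ≥0) : M.util v i t = 0 := by
  simp [Mechanism.util, if_neg h, loser_pay hIR hN h]

lemma ne_some_of_some {i j : Fin n} {o : Option (Fin n)} (h : o = some i) (hji : j ≠ i) :
    o ≠ some j := by
  rw [h]
  intro hc
  exact hji (Option.some_inj.mp hc).symm

/-- In a moral mechanism, the winner's payment does not depend on his own (winning) bid. -/
lemma pay_const {M : Mechanism n} {α : ℝ} (hM : M.Moral α) {v : Fin n → ℝ≥0} {i : Fin n}
    {r : ℝ≥0} (h1 : M.alloc v = some i) (h2 : M.alloc (Function.update v i r) = some i) :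
    M.pay (Function.update v i r) i = M.pay v i := by
  obtain ⟨hIR, hN, hMor⟩ := hM
  set w := Function.update v i r with hw
  have hzero1 : ∑ j ∈ Finset.univ.erase i, (M.util v j (v j) - M.util w j (v j)) = 0 := by
    apply Finset.sum_eq_zero
    intro j hj
    have hji : j ≠ i := Finset.ne_of_mem_erase hj
    rw [loser_util hIR hN (ne_some_of_some h1 hji), loser_util hIR hN (ne_some_of_some h2 hji),
      sub_zero]
  have hzero2 : ∑ j ∈ Finset.univ.erase i, (M.util w j (w j) - M.util v j (w j)) = 0 := by
    apply Finset.sum_eq_zero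
    intro j hj
    have hji : j ≠ i := Finset.ne_of_mem_erase hj
    rw [loser_util hIR hN (ne_some_of_some h1 hji), loser_util hIR hN (ne_some_of_some h2 hji),
      sub_zero]
  have hle1 : M.pay v i ≤ M.pay w i := by
    by_contra hcon
    push_neg at hcon
    have hgain : 0 < M.util w i (v i) - M.util v i (v i) := by
      simp only [Mechanism.util, if_pos h1, if_pos h2]
      linarith
    have := hMor v i r hgain
    rw [hzero1, mul_zero] at this
    simp only [Mechanism.util, if_pos h1, ← hw, if_pos h2] at this
    linarith
  have hv : Function.update w i (v i) = v := by
    rw [hw, Function.update_idem, Function.update_eq_self]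
  have hwi : w i = r := Function.update_self i r v
  have hle2 : M.pay w i ≤ M.pay v i := by
    by_contra hcon
    push_neg at hcon
    have hgain : 0 < M.util (Function.update w i (v i)) i (w i) - M.util w i (w i) := by
      rw [hv, hwi]
      simp only [Mechanism.util, if_pos h1, if_pos h2]
      linarith
    have := hMor w i (v i) hgain
    rw [hv, hwi, hzero2, mul_zero] at this
    simp only [Mechanism.util, if_pos h1, if_pos h2] at this
    linarith
  exact le_antisymm hle2 hle1

/-- The (bid-independent) price of player `i` given the others' bids. -/
noncomputable def price (M : Mechanism n) (i : Fin n) (v : Fin n → ℝ≥0) : ℝ≥0 :=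
  if h : ∃ x, M.alloc (Function.update v i x) = some i
  then (M.pay (Function.update v i h.choose) i).toNNReal else 0

lemma price_spec {M : Mechanism n} {α : ℝ} (hM : M.Moral α) {i : Fin n} {v : Fin n → ℝ≥0}
    {x : ℝ≥0} (hx : M.alloc (Function.update v i x) = some i) :
    (price M i v : ℝ) = M.pay (Function.update v i x) i := by
  have hex : ∃ y, M.alloc (Function.update v i y) = some i := ⟨x, hx⟩
  rw [StmtAux.price, dif_pos hex]
  have hc := hex.choose_spec
  have heq : M.pay (Function.update v i x) i = M.pay (Function.update v i hex.choose) i := by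
    have h2 : M.alloc (Function.update (Function.update v i hex.choose) i x) = some i := by
      rw [Function.update_idem]; exact hx
    have h3 := pay_const hM hc h2
    rwa [Function.update_idem] at h3
  rw [Real.coe_toNNReal _ (hM.2.1 _ i), heq]

lemma price_update {M : Mechanism n} {α : ℝ} (hM : M.Moral α) (i : Fin n) (v : Fin n → ℝ≥0)
    (r : ℝ≥0) : price M i (Function.update v i r) = price M i v := by
  by_cases hex : ∃ x, M.alloc (Function.update v i x) = some i
  · obtain ⟨x, hx⟩ := hex
    have hx' : M.alloc (Function.update (Function.update v i r) i x) = some i := by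
      rw [Function.update_idem]; exact hx
    have e1 := price_spec hM hx'
    rw [Function.update_idem] at e1
    have e2 := price_spec hM hx
    apply NNReal.coe_injective
    rw [e1, e2]
  · have hex' : ¬ ∃ x, M.alloc (Function.update (Function.update v i r) i x) = some i := by
      simpa [Function.update_idem] using hex
    rw [StmtAux.price, StmtAux.price, dif_neg hex, dif_neg hex']

/-- The largest bid among the other players. -/
def mo (i : Fin n) (v : Fin n → ℝ≥0) : ℝ≥0 := (Finset.univ.erase i).sup v

lemma mo_update (i : Fin n) (v : Fin n → ℝ≥0) (r : ℝ≥0) :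
    mo i (Function.update v i r) = mo i v :=
  Finset.sup_congr rfl (fun j hj => Function.update_of_ne (Finset.ne_of_mem_erase hj) _ _)

lemma le_mo {i j : Fin n} (hij : j ≠ i) (v : Fin n → ℝ≥0) : v j ≤ mo i v :=
  Finset.le_sup (Finset.mem_erase.mpr ⟨hij, Finset.mem_univ j⟩)

section Thresh

variable (q : Fin n → (Fin n → ℝ≥0) → ℝ≥0) (F : Fin n → (Fin n → ℝ≥0) → Prop)

/-- Player `i` accepts his offer. -/
def Acc (i : Fin n) (v : Fin n → ℝ≥0) : Prop := F i v ∧ q i v ≤ v i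

noncomputable def tAlloc (v : Fin n → ℝ≥0) : Option (Fin n) :=
  if h : ∃ i, Acc q F i v then some h.choose else none

/-- The generic "personalized threshold" mechanism. -/
noncomputable def thresh : Mechanism n where
  alloc := tAlloc q F
  pay v i := if tAlloc q F v = some i then (q i v : ℝ) else 0

lemma tAlloc_some {v : Fin n → ℝ≥0} {m : Fin n} (h : tAlloc q F v = some m) : Acc q F m v := by
  unfold tAlloc at h
  split at h
  · next hex =>
      injection h with h'
      rw [← h']
      exact hex.choose_spec
  · exact absurd h (by simp)

lemma tAlloc_total {v : Fin n → ℝ≥0} {i : Fin n} (hi : Acc q F i v) :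
    ∃ m, tAlloc q F v = some m := by
  unfold tAlloc
  rw [dif_pos ⟨i, hi⟩]
  exact ⟨_, rfl⟩

lemma acc_eq (Hmax : ∀ v i, mo i v ≤ q i v) {v : Fin n → ℝ≥0} {i m : Fin n} (hi : Acc q F i v) (hm : Acc q F m v)
    (him : i ≠ m) : (v i : ℝ≥0) = q i v := by
  have h2 : v i ≤ mo m v := le_mo him v
  have h4 : q m v ≤ v m := hm.2
  have h5 : v m ≤ mo i v := le_mo him.symm v
  exact le_antisymm (le_trans h2 (le_trans (Hmax v m) (le_trans h4 (le_trans h5 (Hmax v i)))))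
    hi.2

lemma thresh_IR : (thresh q F).IR := by
  intro v i
  show (if tAlloc q F v = some i then (q i v : ℝ) else 0) ≤
    if (thresh q F).alloc v = some i then ((v i : ℝ)) else 0
  show (if tAlloc q F v = some i then (q i v : ℝ) else 0) ≤
    if tAlloc q F v = some i then ((v i : ℝ)) else 0
  by_cases h : tAlloc q F v = some i
  · rw [if_pos h, if_pos h]
    exact_mod_cast (tAlloc_some q F h).2
  · rw [if_neg h, if_neg h]

lemma thresh_NPT : (thresh q F).NPT := by
  intro v i
  show (0 : ℝ) ≤ if tAlloc q F v = some i then (q i v : ℝ) else 0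
  by_cases h : tAlloc q F v = some i
  · rw [if_pos h]; exact (q i v).coe_nonneg
  · rw [if_neg h]

lemma thresh_util (v : Fin n → ℝ≥0) (i : Fin n) (t : ℝ≥0) :
    (thresh q F).util v i t =
      (if tAlloc q F v = some i then (t : ℝ) else 0) -
        (if tAlloc q F v = some i then (q i v : ℝ) else 0) := rfl

lemma thresh_DS (Hmax : ∀ v i, mo i v ≤ q i v)
    (Hq : ∀ v i r, q i (Function.update v i r) = q i v)
    (HF : ∀ v i r, F i (Function.update v i r) ↔ F i v) : (thresh q F).DominantStrategy := by
  intro v i r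
  set w := Function.update v i r with hw
  rw [thresh_util, thresh_util]
  have hq : q i w = q i v := Hq v i r
  by_cases hd : tAlloc q F w = some i
  · rw [if_pos hd, if_pos hd, hq]
    have hiF : F i v := (HF v i r).mp (tAlloc_some q F hd).1
    rcases le_or_gt (q i v) (v i) with hle | hlt
    · have hAcc : Acc q F i v := ⟨hiF, hle⟩
      obtain ⟨m, hm⟩ := tAlloc_total q F hAcc
      by_cases him : m = i
      · rw [him] at hm
        rw [if_pos hm, if_pos hm]
      · have hne : tAlloc q F v ≠ some i := ne_some_of_some hm (fun hc => him hc.symm)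
        have heq : (v i : ℝ≥0) = q i v :=
          acc_eq q F Hmax hAcc (tAlloc_some q F hm) (fun hc => him hc.symm)
        rw [if_neg hne, if_neg hne]
        rw [heq]
        simp
    · have hne : tAlloc q F v ≠ some i :=
        fun hc => absurd (tAlloc_some q F hc).2 (not_le.mpr hlt)
      rw [if_neg hne, if_neg hne]
      have : (v i : ℝ) < (q i v : ℝ) := by exact_mod_cast hlt
      linarith
  · rw [if_neg hd, if_neg hd]
    by_cases ht : tAlloc q F v = some i
    · rw [if_pos ht, if_pos ht]
      have : (q i v : ℝ) ≤ (v i : ℝ) := by exact_mod_cast (tAlloc_some q F ht).2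
      linarith
    · rw [if_neg ht, if_neg ht]

lemma thresh_pay_sum {v : Fin n → ℝ≥0} {m : Fin n} (h : tAlloc q F v = some m) :
    ∑ i, (thresh q F).pay v i = (q m v : ℝ) := by
  have hcongr : ∀ i : Fin n,
      (if tAlloc q F v = some i then (q i v : ℝ) else 0) =
        if i = m then (q i v : ℝ) else 0 := by
    intro i
    rw [h]
    by_cases him : i = m
    · rw [if_pos him, if_pos (by rw [him])]
    · rw [if_neg (fun hc => him (Option.some_inj.mp hc).symm), if_neg him]
  show ∑ i, (if tAlloc q F v = some i then (q i v : ℝ) else 0) = (q m v : ℝ)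
  rw [Finset.sum_congr rfl (fun i _ => hcongr i)]
  rw [Finset.sum_ite_eq' Finset.univ m (fun i => (q i v : ℝ))]
  simp

lemma thresh_pay_sum_nonneg (v : Fin n → ℝ≥0) : 0 ≤ ∑ i, (thresh q F).pay v i :=
  Finset.sum_nonneg (fun i _ => thresh_NPT q F v i)

end Thresh

/-- The reserve prices of mechanism `B`. -/
noncomputable def qB (M : Mechanism n) : Fin n → (Fin n → ℝ≥0) → ℝ≥0 :=
  fun i v => max (mo i v) (price M i v)

def FB (M : Mechanism n) : Fin n → (Fin n → ℝ≥0) → Prop :=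
  fun i v => ∃ x, M.alloc (Function.update v i x) = some i

/-- Pointwise revenue bound: M's revenue is at most the sum of the revenues of the two
truthful mechanisms. -/
lemma rev_pointwise {M : Mechanism n} {α : ℝ} (hM : M.Moral α) (v : Fin n → ℝ≥0) :
    ∑ i, M.pay v i ≤
      ∑ i, (thresh (qB M) (FB M)).pay v i +
        ∑ i, (thresh (fun i v => mo i v) (fun _ _ => True)).pay v i := by
  have hIR := hM.1
  have hN := hM.2.1
  rcases halloc : M.alloc v with _ | j
  · have : ∀ i : Fin n, M.pay v i = 0 := fun i =>
      loser_pay hIR hN (by rw [halloc]; simp)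
    rw [Finset.sum_congr rfl (fun i _ => this i)]
    simp only [Finset.sum_const_zero]
    have h1 := thresh_pay_sum_nonneg (qB M) (FB M) v
    have h2 := thresh_pay_sum_nonneg (n := n) (fun i v => mo i v) (fun _ _ => True) v
    linarith
  · have hsum : ∑ i, M.pay v i = M.pay v j :=
      Finset.sum_eq_single_of_mem j (Finset.mem_univ _)
        (fun k _ hk => loser_pay hIR hN (ne_some_of_some halloc hk))
    have hpv : M.pay v j ≤ (v j : ℝ) := by
      have := hIR v j; rwa [if_pos halloc] at this
    have hxw : M.alloc (Function.update v j (v j)) = some j := by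
      rw [Function.update_eq_self]; exact halloc
    have hPr : (price M j v : ℝ) = M.pay v j := by
      have := price_spec hM hxw
      rwa [Function.update_eq_self] at this
    rw [hsum]
    rcases le_or_gt (mo j v) (v j) with hcase | hcase
    · -- mechanism B sells at a price at least M.pay v j
      have hprle : price M j v ≤ v j := by
        rw [← NNReal.coe_le_coe, hPr]; exact hpv
      have hAcc : Acc (qB M) (FB M) j v := ⟨⟨v j, hxw⟩, max_le hcase hprle⟩
      obtain ⟨m, hm⟩ := tAlloc_total (qB M) (FB M) hAcc
      have hBsum : ∑ i, (thresh (qB M) (FB M)).pay v i = (qB M m v : ℝ) :=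
        thresh_pay_sum _ _ hm
      have hC := thresh_pay_sum_nonneg (n := n) (fun i v => mo i v) (fun _ _ => True) v
      have hgoal : M.pay v j ≤ (qB M m v : ℝ) := by
        by_cases hmj : m = j
        · rw [hmj]
          have : price M j v ≤ qB M j v := le_max_right _ _
          calc M.pay v j = (price M j v : ℝ) := hPr.symm
            _ ≤ (qB M j v : ℝ) := by exact_mod_cast this
        · have hvj : v j ≤ qB M m v :=
            le_trans (le_mo (fun hc => hmj hc.symm) v) (le_max_left _ _)
          calc M.pay v j ≤ (v j : ℝ) := hpv
            _ ≤ (qB M m v : ℝ) := by exact_mod_cast hvj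
      linarith
    · -- plain Vickrey sells at a price at least M.pay v j
      obtain ⟨i0, -, hi0⟩ := Finset.exists_max_image Finset.univ v ⟨j, Finset.mem_univ j⟩
      have hAcc : Acc (n := n) (fun i v => mo i v) (fun _ _ => True) i0 v :=
        ⟨trivial, Finset.sup_le (fun k _ => hi0 k (Finset.mem_univ k))⟩
      obtain ⟨m, hm⟩ := tAlloc_total _ _ hAcc
      have hCsum : ∑ i, (thresh (n := n) (fun i v => mo i v) (fun _ _ => True)).pay v i
          = (mo m v : ℝ) := thresh_pay_sum _ _ hm
      have hB := thresh_pay_sum_nonneg (qB M) (FB M) v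
      have hmj : m ≠ j := by
        intro hc
        have := (tAlloc_some _ _ hm).2
        rw [hc] at this
        exact absurd this (not_le.mpr hcase)
      have hvj : v j ≤ mo m v := le_mo (fun hc => hmj hc.symm) v
      have hgoal : M.pay v j ≤ (mo m v : ℝ) := by
        calc M.pay v j ≤ (v j : ℝ) := hpv
          _ ≤ (mo m v : ℝ) := by exact_mod_cast hvj
      linarith

end StmtAux

theorem stmt12 {n : ℕ} (S : Finset (Fin n → ℝ≥0)) (H : (Fin n → ℝ≥0) → ℝ)
    (hH0 : ∀ v, 0 ≤ H v) (hHsupp : ∀ v, v ∉ S → H v = 0) (hH1 : ∑ v ∈ S, H v = 1)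
    (α : ℝ) (hα0 : 0 ≤ α) (hα1 : α ≤ 1)
    (M : Mechanism n) (hM : M.Moral α) :
    ∃ M' : Mechanism n, M'.IR ∧ M'.NPT ∧ M'.DominantStrategy ∧
      (∑ v ∈ S, H v * ∑ i, M.pay v i) / 2 ≤ ∑ v ∈ S, H v * ∑ i, M'.pay v i := by
  classical
  set B := StmtAux.thresh (StmtAux.qB M) (StmtAux.FB M) with hB
  set C := StmtAux.thresh (n := n) (fun i v => StmtAux.mo i v) (fun _ _ => True) with hC
  have hBIR : B.IR := StmtAux.thresh_IR _ _
  have hBNPT : B.NPT := StmtAux.thresh_NPT _ _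
  have hBDS : B.DominantStrategy := by
    apply StmtAux.thresh_DS
    · intro v i; exact le_max_left _ _
    · intro v i r
      unfold StmtAux.qB
      rw [StmtAux.mo_update, StmtAux.price_update hM]
    · intro v i r
      unfold StmtAux.FB
      simp [Function.update_idem]
  have hCIR : C.IR := StmtAux.thresh_IR _ _
  have hCNPT : C.NPT := StmtAux.thresh_NPT _ _
  have hCDS : C.DominantStrategy := by
    apply StmtAux.thresh_DS
    · intro v i; exact le_rfl
    · intro v i r; exact StmtAux.mo_update i v r
    · intro v i r; exact Iff.rfl
  have key : ∀ v, ∑ i, M.pay v i ≤ ∑ i, B.pay v i + ∑ i, C.pay v i :=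
    fun v => StmtAux.rev_pointwise hM v
  have hsum : ∑ v ∈ S, H v * ∑ i, M.pay v i ≤
      ∑ v ∈ S, H v * ∑ i, B.pay v i + ∑ v ∈ S, H v * ∑ i, C.pay v i := by
    rw [← Finset.sum_add_distrib]
    apply Finset.sum_le_sum
    intro v hv
    rw [← mul_add]
    exact mul_le_mul_of_nonneg_left (key v) (hH0 v)
  rcases le_total (∑ v ∈ S, H v * ∑ i, B.pay v i) (∑ v ∈ S, H v * ∑ i, C.pay v i) with h | h
  · exact ⟨C, hCIR, hCNPT, hCDS, by linarith⟩
  · exact ⟨B, hBIR, hBNPT, hBDS, by linarith⟩
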